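/- For every element b of O_K not divisible by 2, there exists a unit ξ of O_K such that ξ·b is a square modulo 4·O_K, i.e. there exists x ∈ O_K with ξ·b ≡ x² (mod 4·O_K). -/

import Mathlib

open Polynomial

/-- `K = ℚ(√5)`, the real quadratic field obtained by adjoining `√5` to `ℚ`. -/
noncomputable def K : IntermediateField ℚ ℝ := IntermediateField.adjoin ℚ {Real.sqrt 5}

/-- `O_K`, the ring of integers of `K = ℚ(√5)`. -/
noncomputable abbrev OK : Type := NumberField.RingOfIntegers K

open IntermediateField
set_option maxHeartbeats 3000000
set_option linter.unnecessarySimpa false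

lemma sqrt5_mem : Real.sqrt 5 ∈ K := IntermediateField.subset_adjoin ℚ {Real.sqrt 5} rfl

noncomputable def sqrt5 : K := ⟨Real.sqrt 5, sqrt5_mem⟩

lemma sqrt5_sq : sqrt5 ^ 2 = 5 := by
  apply Subtype.ext
  push_cast [sqrt5]
  exact Real.sq_sqrt (by norm_num)

lemma sqrt5_int : IsIntegral ℚ (Real.sqrt 5) :=
  ⟨X ^ 2 - C 5, by monicity!, by simp [Real.sq_sqrt (show (5:ℝ) ≥ 0 by norm_num)]⟩

lemma K_eq : K = ℚ⟮Real.sqrt 5⟯ := rfl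

instance : FiniteDimensional ℚ K :=
  IntermediateField.adjoin.finiteDimensional sqrt5_int

instance : NumberField K := ⟨⟩

lemma finrank_K : Module.finrank ℚ K = 2 := by
  have e : Module.finrank ℚ K = Module.finrank ℚ ℚ⟮Real.sqrt 5⟯ := rfl
  rw [e, IntermediateField.adjoin.finrank sqrt5_int]
  have hdvd : minpoly ℚ (Real.sqrt 5) ∣ X ^ 2 - C 5 :=
    minpoly.dvd ℚ _ (by simp [Real.sq_sqrt (show (5:ℝ) ≥ 0 by norm_num)])
  have h2 : (minpoly ℚ (Real.sqrt 5)).natDegree ≤ 2 := by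
    have := Polynomial.natDegree_le_of_dvd hdvd (by
      intro h
      have := congrArg (Polynomial.coeff · 2) h
      simp at this)
    simpa using this.trans_eq (by compute_degree!)
  have h1 : 2 ≤ (minpoly ℚ (Real.sqrt 5)).natDegree := by
    rw [minpoly.two_le_natDegree_iff sqrt5_int]
    intro ⟨q, hq⟩
    have hirr : Irrational (Real.sqrt 5) := by
      have := Nat.Prime.irrational_sqrt (p := 5) (by norm_num)
      simpa using this
    exact hirr ⟨q, hq⟩
  omega

noncomputable def φK : K := (1 + sqrt5) / 2

lemma φK_sq : φK ^ 2 = φK + 1 := by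
  have h2 : (2 : K) ≠ 0 := two_ne_zero
  unfold φK
  linear_combination (1/4 : K) * sqrt5_sq

lemma φK_int : IsIntegral ℤ φK :=
  ⟨X ^ 2 - X - C 1, by monicity!, by simp; linear_combination φK_sq⟩

noncomputable def φ : OK := ⟨φK, φK_int⟩

lemma coeφ : (φ : K) = φK := rfl

lemma φ_sq : φ ^ 2 = φ + 1 := by
  apply NumberField.RingOfIntegers.ext
  push_cast [coeφ]
  linear_combination φK_sq

noncomputable def φu : OKˣ :=
  ⟨φ, φ - 1, by linear_combination φ_sq, by linear_combination φ_sq⟩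

lemma card_quot_two : Nat.card (OK ⧸ Ideal.span ({2} : Set OK)) = 4 := by
  rw [← Submodule.cardQuot_apply, ← Ideal.absNorm_apply, Ideal.absNorm_span_singleton]
  have h2 : (2 : OK) = algebraMap ℤ OK 2 := by norm_num
  rw [h2, Algebra.norm_algebraMap_of_basis (NumberField.RingOfIntegers.basis K)]
  rw [← Module.finrank_eq_card_chooseBasisIndex, NumberField.RingOfIntegers.rank, finrank_K]
  norm_num

lemma two_not_unit : ¬ IsUnit (2 : OK) := by
  intro h
  have htop : Ideal.span ({2} : Set OK) = ⊤ := Ideal.span_singleton_eq_top.mpr h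
  have h4 := card_quot_two
  rw [htop] at h4
  have : Subsingleton (OK ⧸ (⊤ : Ideal OK)) := Ideal.Quotient.subsingleton_iff.mpr rfl
  have hle : Nat.card (OK ⧸ (⊤ : Ideal OK)) = 1 := Nat.card_of_subsingleton 0
  omega

lemma not_dvd_of_isUnit {u : OK} (hu : IsUnit u) : ¬ (2 : OK) ∣ u :=
  fun h => two_not_unit (isUnit_of_dvd_unit h hu)

lemma isUnit_φ : IsUnit φ := φu.isUnit

lemma isUnit_φ_sub_one : IsUnit (φ - 1) :=
  IsUnit.of_mul_eq_one φ (by linear_combination φ_sq)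

lemma isUnit_φ_add_one : IsUnit (φ + 1) := by
  have : φ + 1 = φ ^ 2 := φ_sq.symm
  rw [this]
  exact isUnit_φ.pow 2

lemma residues (c : OK) :
    (2:OK) ∣ c ∨ (2:OK) ∣ c - 1 ∨ (2:OK) ∣ c - φ ∨ (2:OK) ∣ c - (φ + 1) := by
  classical
  have hfin : Finite (OK ⧸ Ideal.span ({2} : Set OK)) :=
    Nat.finite_of_card_ne_zero (by rw [card_quot_two]; norm_num)
  have hfty := Fintype.ofFinite (OK ⧸ Ideal.span ({2} : Set OK))
  let q : OK → OK ⧸ Ideal.span ({2} : Set OK) :=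
    fun x => Ideal.Quotient.mk (Ideal.span ({2} : Set OK)) x
  have hne : ∀ x y : OK, IsUnit (x - y) → q x ≠ q y := by
    intro x y hu h
    rw [show q x = Ideal.Quotient.mk (Ideal.span ({2} : Set OK)) x from rfl,
      show q y = Ideal.Quotient.mk (Ideal.span ({2} : Set OK)) y from rfl,
      Ideal.Quotient.eq, Ideal.mem_span_singleton] at h
    exact two_not_unit (isUnit_of_dvd_unit h hu)
  have h10 : q 1 ≠ q 0 := hne 1 0 (by simp)
  have hφ0 : q φ ≠ q 0 := hne φ 0 (by simpa using isUnit_φ)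
  have hφ10 : q (φ+1) ≠ q 0 := hne (φ+1) 0 (by simpa using isUnit_φ_add_one)
  have hφ1 : q φ ≠ q 1 := hne φ 1 isUnit_φ_sub_one
  have hφ11 : q (φ+1) ≠ q 1 := hne (φ+1) 1 (by simpa using isUnit_φ)
  have hφ1φ' : True := trivial
  have hφ1φ : q (φ+1) ≠ q φ := hne (φ+1) φ (by simp)
  let T : Finset (OK ⧸ Ideal.span ({2} : Set OK)) := {q 0, q 1, q φ, q (φ+1)}
  have hTcard : T.card = 4 := by
    rw [show T = insert (q 0) (insert (q 1) (insert (q φ) {q (φ+1)})) from rfl]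
    rw [Finset.card_insert_of_notMem (by simp [h10.symm, hφ0.symm, hφ10.symm])]
    rw [Finset.card_insert_of_notMem (by simp [hφ1.symm, hφ11.symm])]
    rw [Finset.card_insert_of_notMem (by simp [hφ1φ.symm])]
    simp
  have hTuniv : T = Finset.univ := by
    apply Finset.eq_univ_of_card
    rw [hTcard, ← Nat.card_eq_fintype_card, card_quot_two]
  have hmem : q c ∈ T := hTuniv ▸ Finset.mem_univ (q c)
  have hmem' : q c = q 0 ∨ q c = q 1 ∨ q c = q φ ∨ q c = q (φ+1) := by
    simpa [T, Finset.mem_insert] using hmem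
  have conv : ∀ r : OK, q c = q r → (2:OK) ∣ c - r := by
    intro r h
    rw [show q c = Ideal.Quotient.mk (Ideal.span ({2} : Set OK)) c from rfl,
      show q r = Ideal.Quotient.mk (Ideal.span ({2} : Set OK)) r from rfl,
      Ideal.Quotient.eq, Ideal.mem_span_singleton] at h
    exact h
  rcases hmem' with h | h | h | h
  · exact Or.inl (by simpa using conv 0 h)
  · exact Or.inr (Or.inl (conv 1 h))
  · exact Or.inr (Or.inr (Or.inl (conv φ h)))
  · exact Or.inr (Or.inr (Or.inr (conv (φ+1) h)))

lemma cube_cong_one (b : OK) (hb : ¬ (2:OK) ∣ b) : (2:OK) ∣ b ^ 3 - 1 := by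
  rcases residues b with h | h | h | h
  · exact absurd h hb
  · obtain ⟨t, ht⟩ := h
    exact ⟨3*t + 6*t^2 + 4*t^3,
      by linear_combination (b^2 + b*(1+2*t) + (1+2*t)^2) * ht⟩
  · obtain ⟨t, ht⟩ := h
    exact ⟨φ + 3*φ^2*t + 6*φ*t^2 + 4*t^3,
      by linear_combination (b^2 + b*(φ+2*t) + (φ+2*t)^2) * ht + (φ+1) * φ_sq⟩
  · obtain ⟨t, ht⟩ := h
    exact ⟨4*φ+2 + 3*(φ+1)^2*t + 6*(φ+1)*t^2 + 4*t^3,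
      by linear_combination (b^2 + b*(φ+1+2*t) + (φ+1+2*t)^2) * ht + (φ+4) * φ_sq⟩

lemma dvd_aux {R : Type*} [CommRing R] (b s ξ d : R) (h : b ^ 3 = s + 4 * d)
    (hs : (4 : R) ∣ ξ - s ^ 3) : (4 : R) ∣ ξ * b - (b ^ 5) ^ 2 := by
  obtain ⟨e, he⟩ := hs
  refine ⟨b * e - b * (3 * s ^ 2 * d + 12 * s * d ^ 2 + 16 * d ^ 3), ?_⟩
  linear_combination (-b * (b ^ 6 + b ^ 3 * (s + 4 * d) + (s + 4 * d) ^ 2)) * h + b * he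

/-- For every `b ∈ O_K` not divisible by `2`, there is a unit `ξ` of `O_K` such
that `ξ·b` is a square modulo `4·O_K`. -/
theorem exists_unit_mul_square_mod_four (b : OK) (hb : ¬ (2 : OK) ∣ b) :
    ∃ (ξ : OKˣ) (x : OK), (4 : OK) ∣ (ξ : OK) * b - x ^ 2 := by
  obtain ⟨cc, hcc⟩ := cube_cong_one b hb
  rcases residues cc with h | h | h | h <;> obtain ⟨d, hd⟩ := h
  · refine ⟨1, b ^ 5, ?_⟩
    rw [Units.val_one]
    exact dvd_aux b 1 1 d (by linear_combination hcc + 2*hd) (by norm_num)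
  · refine ⟨-1, b ^ 5, ?_⟩
    rw [Units.val_neg, Units.val_one]
    exact dvd_aux b 3 (-1) d (by linear_combination hcc + 2*hd) ⟨-7, by ring⟩
  · refine ⟨(φu⁻¹) ^ 3, b ^ 5, ?_⟩
    have hv : (((φu⁻¹ : OKˣ) ^ 3 : OKˣ) : OK) = (φ - 1) ^ 3 := rfl
    rw [hv]
    exact dvd_aux b (1 + 2*φ) ((φ - 1) ^ 3) d (by linear_combination hcc + 2*hd)
      ⟨-8*φ - 6, by linear_combination (-7*φ - 22) * φ_sq⟩
  · refine ⟨-(φu⁻¹) ^ 3, b ^ 5, ?_⟩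
    have hv : ((-(φu⁻¹) ^ 3 : OKˣ) : OK) = -(φ - 1) ^ 3 := rfl
    rw [hv]
    exact dvd_aux b (3 + 2*φ) (-(φ - 1) ^ 3) d (by linear_combination hcc + 2*hd)
      ⟨-27*φ - 17, by linear_combination (-9*φ - 42) * φ_sq⟩
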